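/- There exists a Steiner quadruple system of order 14 that admits a 1-overlap cycle. -/
import Mathlib

/-- `(X, B)` is a Steiner quadruple system of order `v`: `X` has `v` points, every block in
`B` is a 4-element subset of `X`, and every 3-element subset of `X` is contained in exactly
one block of `B`. -/
def IsSQS {α : Type*} [DecidableEq α] (X : Finset α) (B : Finset (Finset α)) (v : ℕ) : Prop :=
  X.card = v ∧
  (∀ b ∈ B, b ⊆ X ∧ b.card = 4) ∧
  (∀ t : Finset α, t ⊆ X → t.card = 3 → ∃! b, b ∈ B ∧ t ⊆ b)

/-- The last `s` points of `l₁` equal, in order, the first `s` points of `l₂`. -/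
def Overlaps {α : Type*} (s : ℕ) (l₁ l₂ : List α) : Prop :=
  s ≤ l₁.length ∧ s ≤ l₂.length ∧ l₁.drop (l₁.length - s) = l₂.take s

/-- `Ls` is an `s`-overlap cycle for the block set `B`: a nonempty cyclic listing of
duplicate-free orderings, one for each block of `B` (each block appearing exactly once),
in which the last `s` points of each listing equal, in order, the first `s` points of the
next listing (cyclically, i.e. including the wrap-around from the last listing to the
first one). -/
def IsOCycle {α : Type*} [DecidableEq α] (s : ℕ) (B : Finset (Finset α))
    (Ls : List (List α)) : Prop :=
  Ls ≠ [] ∧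
  (∀ l ∈ Ls, l.Nodup) ∧
  (Ls.map List.toFinset).Perm B.toList ∧
  List.Chain' (Overlaps s) (Ls ++ Ls.take 1)

def myLs : List (List ℕ) := [
  [0, 1, 11, 2],
  [2, 1, 8, 9],
  [9, 6, 10, 4],
  [4, 2, 9, 11],
  [11, 4, 10, 1],
  [1, 3, 5, 11],
  [11, 3, 8, 2],
  [2, 11, 12, 5],
  [5, 0, 7, 1],
  [1, 7, 13, 2],
  [2, 7, 12, 9],
  [9, 0, 10, 13],
  [13, 0, 6, 7],
  [7, 0, 2, 10],
  [10, 6, 7, 12],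
  [12, 5, 8, 1],
  [1, 0, 12, 13],
  [13, 5, 10, 1],
  [1, 2, 3, 6],
  [6, 4, 11, 0],
  [0, 3, 6, 12],
  [12, 7, 13, 5],
  [5, 3, 10, 12],
  [12, 1, 11, 6],
  [6, 7, 9, 8],
  [8, 1, 6, 13],
  [13, 7, 11, 4],
  [4, 0, 13, 5],
  [5, 2, 6, 10],
  [10, 0, 5, 11],
  [11, 2, 13, 10],
  [10, 7, 9, 1],
  [1, 3, 10, 8],
  [8, 7, 11, 1],
  [1, 11, 13, 9],
  [9, 5, 10, 8],
  [8, 12, 13, 11],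
  [11, 8, 9, 0],
  [0, 1, 3, 9],
  [9, 8, 13, 4],
  [4, 6, 12, 5],
  [5, 8, 11, 4],
  [4, 2, 3, 7],
  [7, 4, 9, 0],
  [0, 2, 5, 3],
  [3, 2, 12, 13],
  [13, 6, 11, 5],
  [5, 3, 4, 9],
  [9, 5, 12, 0],
  [0, 2, 12, 4],
  [4, 9, 12, 1],
  [1, 5, 9, 6],
  [6, 0, 5, 8],
  [8, 6, 10, 11],
  [11, 0, 13, 3],
  [3, 6, 7, 5],
  [5, 3, 8, 13],
  [13, 10, 12, 4],
  [4, 0, 1, 8],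
  [8, 0, 13, 2],
  [2, 7, 11, 6],
  [6, 3, 8, 4],
  [4, 5, 10, 7],
  [7, 0, 8, 3],
  [3, 6, 11, 9],
  [9, 2, 10, 3],
  [3, 4, 11, 12],
  [12, 9, 13, 6],
  [6, 1, 7, 4],
  [4, 7, 8, 12],
  [12, 9, 11, 10],
  [10, 2, 4, 8],
  [8, 2, 6, 12],
  [12, 1, 3, 7],
  [7, 2, 8, 5],
  [5, 1, 2, 4],
  [4, 0, 10, 3],
  [3, 9, 12, 8],
  [8, 7, 10, 13],
  [13, 2, 4, 6],
  [6, 10, 13, 3],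
  [3, 1, 4, 13],
  [13, 7, 9, 3],
  [3, 7, 11, 10],
  [10, 0, 8, 12],
  [12, 1, 10, 2],
  [2, 9, 13, 5],
  [5, 7, 9, 11],
  [11, 7, 12, 0],
  [0, 1, 10, 6],
  [6, 2, 9, 0]
]

set_option maxRecDepth 1000000 in
set_option maxHeartbeats 4000000 in
def myB : Finset (Finset ℕ) := ⟨(myLs.map List.toFinset : List (Finset ℕ)), by decide⟩

instance decOverlaps {α : Type*} [DecidableEq α] (s : ℕ) (l₁ l₂ : List α) :
    Decidable (Overlaps s l₁ l₂) := by unfold Overlaps; infer_instance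

lemma exu {B : Finset (Finset ℕ)} {t : Finset ℕ}
    (h : (B.filter (fun b => t ⊆ b)).card = 1) : ∃! b, b ∈ B ∧ t ⊆ b := by
  obtain ⟨a, ha⟩ := Finset.card_eq_one.mp h
  have hmem := Finset.mem_filter.mp (ha ▸ Finset.mem_singleton_self a)
  refine ⟨a, ⟨hmem.1, hmem.2⟩, fun b hb => ?_⟩
  have : b ∈ B.filter (fun b => t ⊆ b) := Finset.mem_filter.mpr ⟨hb.1, hb.2⟩
  rw [ha] at this
  exact Finset.mem_singleton.mp this

set_option maxRecDepth 1000000 in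
set_option maxHeartbeats 10000000 in
lemma keyB : ((List.range 14).all (fun a => (List.range 14).all (fun b => (List.range 14).all (fun c =>
    a == b || a == c || b == c ||
    (myLs.filter (fun l => l.contains a && l.contains b && l.contains c)).length == 1)))) = true := by
  decide

lemma len_fm {α β : Type*} (f : α → β) (p : β → Bool) (l : List α) :
    ((l.map f).filter p).length = (l.filter (fun x => p (f x))).length := by
  induction l with
  | nil => rfl
  | cons x l ih => simp only [List.map_cons, List.filter_cons]; cases p (f x) <;> simp [ih]

lemma predeq (a b c : ℕ) (l : List ℕ) :
    (decide (({a, b, c} : Finset ℕ) ⊆ l.toFinset)) = (l.contains a && l.contains b && l.contains c) := by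
  rw [Bool.eq_iff_iff]
  simp only [decide_eq_true_eq, Bool.and_eq_true, List.contains, List.elem_iff,
    Finset.insert_subset_iff, Finset.singleton_subset_iff, List.mem_toFinset]
  tauto

lemma cardF (p : Finset ℕ → Prop) [DecidablePred p] :
    (myB.filter p).card = ((myLs.map List.toFinset).filter (fun b => decide (p b))).length := rfl

lemma key' : ∀ t : Finset ℕ, t ⊆ Finset.range 14 → t.card = 3 →
    (myB.filter (fun b => t ⊆ b)).card = 1 := by
  intro t ht hc
  obtain ⟨a, b, c, hab, hac, hbc, rfl⟩ := Finset.card_eq_three.mp hc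
  have ha14 : a < 14 := Finset.mem_range.mp (ht (by simp))
  have hb14 : b < 14 := Finset.mem_range.mp (ht (by simp))
  have hc14 : c < 14 := Finset.mem_range.mp (ht (by simp))
  have h3 := keyB
  simp only [List.all_eq_true, List.mem_range, Bool.or_eq_true, beq_iff_eq] at h3
  rcases h3 a ha14 b hb14 c hc14 with (((h | h) | h) | hlen)
  · exact absurd h hab
  · exact absurd h hac
  · exact absurd h hbc
  · rw [cardF, len_fm, List.filter_congr (fun l _ => predeq a b c l)]
    exact hlen

def chainB {α : Type*} (R : α → α → Bool) : List α → Bool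
  | a :: b :: l => R a b && chainB R (b :: l)
  | _ => true

lemma chain'_of_chainB {α : Type*} {R : α → α → Prop} [DecidableRel R] :
    ∀ {l : List α}, chainB (fun a b => decide (R a b)) l = true → List.Chain' R l
  | [], _ => List.isChain_nil
  | [_], _ => List.isChain_singleton _
  | a :: b :: l, h => by
      simp only [chainB, Bool.and_eq_true, decide_eq_true_eq] at h
      exact List.isChain_cons_cons.mpr ⟨h.1, chain'_of_chainB h.2⟩

set_option maxRecDepth 1000000 in
set_option maxHeartbeats 10000000 in
lemma chainkey : List.Chain' (Overlaps 1) (myLs ++ myLs.take 1) :=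
  chain'_of_chainB (by decide)

set_option maxRecDepth 1000000 in
set_option maxHeartbeats 10000000 in
lemma permkey : (myLs.map List.toFinset).Perm myB.toList := by
  have h1 : (myLs.map List.toFinset).Nodup := by decide
  refine (List.perm_ext_iff_of_nodup h1 (Finset.nodup_toList _)).mpr fun a => ?_
  simp only [Finset.mem_toList]
  rfl

set_option maxRecDepth 1000000 in
set_option maxHeartbeats 10000000 in
/-- There exists a Steiner quadruple system of order 14 that admits a 1-overlap cycle. -/
theorem sqs_14_one_ocycle :
    ∃ (X : Finset ℕ) (B : Finset (Finset ℕ)) (Ls : List (List ℕ)),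
      IsSQS X B 14 ∧ IsOCycle 1 B Ls := by
  refine ⟨Finset.range 14, myB, myLs, ⟨by decide, by decide, fun t ht hc => exu (key' t ht hc)⟩,
    by decide, by decide, permkey, chainkey⟩
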